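/- Let Y be a Banach space and let K ⊆ Y be a closed convex cone that possesses a bounded base B. Then there exists a continuous linear functional y* ∈ K* (the dual cone) such that y*(b) ≥ 1 for all b ∈ B; in particular, the dual cone K* has nonempty norm interior in Y*. -/

import Mathlib

open Filter Topology Set

/-- Let `Y` be a Banach space and `K ⊆ Y` a closed convex cone with a
bounded base `B`. Then there is a continuous linear functional `y*` in the dual cone `K*`
with `y*(b) ≥ 1` for all `b ∈ B`; in particular `K*` has nonempty norm interior in `Y*`. -/
theorem cone_bounded_base_dual_interior
    {Y : Type*} [NormedAddCommGroup Y] [NormedSpace ℝ Y] [CompleteSpace Y]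
    (K : Set Y) (hKclosed : IsClosed K) (hKconv : Convex ℝ K)
    (hKcone : ∀ ⦃c : ℝ⦄, 0 ≤ c → ∀ ⦃y⦄, y ∈ K → c • y ∈ K)
    (B : Set Y) (hBconv : Convex ℝ B) (hBK : B ⊆ K)
    (hBbdd : Bornology.IsBounded B) (hB0 : (0 : Y) ∉ closure B)
    (hBbase : K = {y : Y | ∃ l : ℝ, 0 ≤ l ∧ ∃ b ∈ B, y = l • b}) :
    (∃ φ : StrongDual ℝ Y, (∀ v ∈ K, 0 ≤ φ v) ∧ ∀ b ∈ B, 1 ≤ φ b)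
      ∧ (interior {φ : StrongDual ℝ Y | ∀ v ∈ K, 0 ≤ φ v}).Nonempty := by
  -- separate closure B (closed convex) from 0
  obtain ⟨f, u, hfu, hu0⟩ :=
    geometric_hahn_banach_closed_point (hBconv.closure) isClosed_closure hB0
  have hu : u < 0 := by simpa using hu0
  set φ : StrongDual ℝ Y := (-u)⁻¹ • (-f) with hφ
  have hφb : ∀ b ∈ B, 1 ≤ φ b := by
    intro b hb
    have hfb : f b < u := hfu b (subset_closure hb)
    have : (1 : ℝ) ≤ (-u)⁻¹ * (-f b) := by
      rw [le_inv_mul_iff₀ (by linarith)]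
      linarith
    simpa [hφ] using this
  have hφK : ∀ v ∈ K, 0 ≤ φ v := by
    intro v hv
    rw [hBbase] at hv
    obtain ⟨l, hl, b, hb, rfl⟩ := hv
    have h1 := hφb b hb
    have h2 : φ (l • b) = l * φ b := by simp
    rw [h2]
    exact mul_nonneg hl (by linarith)
  refine ⟨⟨φ, hφK, hφb⟩, ?_⟩
  rcases B.eq_empty_or_nonempty with hBe | ⟨b₀, hb₀⟩
  · have hK : K = ∅ := by
      rw [hBbase, hBe]; ext y; simp
    have : {ψ : StrongDual ℝ Y | ∀ v ∈ K, 0 ≤ ψ v} = univ := by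
      ext ψ; simp [hK]
    rw [this, interior_univ]
    exact univ_nonempty
  · obtain ⟨M, hM⟩ := hBbdd.exists_norm_le
    have hM0 : 0 ≤ M := le_trans (norm_nonneg _) (hM _ hb₀)
    refine ⟨φ, mem_interior.2 ⟨Metric.ball φ (M + 1)⁻¹, ?_, Metric.isOpen_ball,
      Metric.mem_ball_self (by positivity)⟩⟩
    intro ψ hψ v hv
    rw [hBbase] at hv
    obtain ⟨l, hl, b, hb, rfl⟩ := hv
    have h2 : ψ (l • b) = l * ψ b := by simp
    rw [h2]
    refine mul_nonneg hl ?_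
    have hdiff : |ψ b - φ b| ≤ (M + 1)⁻¹ * M := by
      have : ‖ψ - φ‖ < (M + 1)⁻¹ := by
        simpa [dist_eq_norm] using Metric.mem_ball.1 hψ
      calc |ψ b - φ b| = ‖(ψ - φ) b‖ := by simp [Real.norm_eq_abs]
        _ ≤ ‖ψ - φ‖ * ‖b‖ := (ψ - φ).le_opNorm b
        _ ≤ (M + 1)⁻¹ * M :=
          mul_le_mul this.le (hM b hb) (norm_nonneg _) (by positivity)
    have hlt : (M + 1)⁻¹ * M < 1 := by
      rw [inv_mul_lt_iff₀ (by linarith)]; linarith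
    have h1 := hφb b hb
    have := abs_le.1 hdiff
    linarith
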